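/- arXiv:1810.06829 — 3 statements merged into one kernel-verified Lean document; each statement's English description precedes it below -/
import Mathlib

section
/- For every n ≥ 1 and every x ∈ [0,1], the modified Durrmeyer operator satisfies D_n^{M,1}(e_0; x) = 2a_0(n) + a_1(n), where e_0(t) = 1. -/
open Filter Topology

/-- Bernstein basis polynomial `p_{n,k}(x)`, zero when `k < 0` or `k > n`. -/
noncomputable def bern (n : ℕ) (k : ℤ) (x : ℝ) : ℝ :=
  if 0 ≤ k ∧ k ≤ (n : ℤ) then (n.choose k.toNat : ℝ) * x ^ k.toNat * (1 - x) ^ (n - k.toNat)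
  else 0

/-- Modified Bernstein basis `p_{n,k}^{M,1}(x)` of Khosravian-Arab et al. -/
noncomputable def pM1 (a0 a1 : ℕ → ℝ) (n : ℕ) (k : ℤ) (x : ℝ) : ℝ :=
  (a1 n * x + a0 n) * bern (n - 1) k x + (a1 n * (1 - x) + a0 n) * bern (n - 1) (k - 1) x

/-- First-order modified Durrmeyer operator `D_n^{M,1}(f;x)`. -/
noncomputable def DM1 (a0 a1 : ℕ → ℝ) (n : ℕ) (f : ℝ → ℝ) (x : ℝ) : ℝ :=
  ((n : ℝ) + 1) * ∑ k ∈ Finset.range (n + 1),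
    pM1 a0 a1 n k x * ∫ t in (0:ℝ)..1, bern n k t * f t

lemma beta_nat (b : ℕ) : ∀ a : ℕ, (∫ t in (0:ℝ)..1, t^a * (1-t)^b) =
    (a.factorial * b.factorial : ℝ) / ((a+b+1).factorial) := by
  induction b with
  | zero =>
    intro a
    simp only [pow_zero, mul_one, integral_pow]
    rw [one_pow, zero_pow (by omega), sub_zero, Nat.factorial_zero, Nat.add_zero,
      Nat.factorial_succ]
    push_cast
    rw [mul_one, mul_comm ((a:ℝ)+1), div_mul_eq_div_div,
      div_self (by positivity : (Nat.factorial a : ℝ) ≠ 0)]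
  | succ b ih =>
    intro a
    have hder : ∀ t ∈ Set.uIcc (0:ℝ) 1, HasDerivAt (fun t : ℝ => t^(a+1) * (1-t)^(b+1))
        (((a:ℝ)+1) * (t^a * (1-t)^(b+1)) - ((b:ℝ)+1) * (t^(a+1) * (1-t)^b)) t := by
      intro t _
      have h1 : HasDerivAt (fun t:ℝ => t^(a+1)) (((a:ℝ)+1) * t^a) t := by
        simpa using hasDerivAt_pow (a+1) t
      have h2 : HasDerivAt (fun t:ℝ => (1-t)^(b+1)) (((b:ℝ)+1) * (1-t)^b * (-1)) t := by
        have := (((hasDerivAt_id t).const_sub 1).fun_pow (b+1))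
        simpa using this
      have := h1.fun_mul h2
      exact this.congr_deriv (by ring)
    have hint : IntervalIntegrable (fun t : ℝ =>
        ((a:ℝ)+1) * (t^a * (1-t)^(b+1)) - ((b:ℝ)+1) * (t^(a+1) * (1-t)^b))
        MeasureTheory.volume 0 1 := by
      apply Continuous.intervalIntegrable; continuity
    have key := intervalIntegral.integral_eq_sub_of_hasDerivAt hder hint
    simp only [one_pow, sub_self, zero_pow (Nat.succ_ne_zero b), mul_zero,
      zero_pow (Nat.succ_ne_zero a), sub_zero, zero_mul, sub_self] at key
    rw [intervalIntegral.integral_sub (by apply Continuous.intervalIntegrable; continuity)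
      (by apply Continuous.intervalIntegrable; continuity),
      intervalIntegral.integral_const_mul, intervalIntegral.integral_const_mul, ih] at key
    have ha : ((a:ℝ)+1) ≠ 0 := by positivity
    have h2 : (∫ t in (0:ℝ)..1, t^a * (1-t)^(b+1)) =
        ((b:ℝ)+1) * ((((a+1).factorial : ℝ) * b.factorial) / ((a+1+b+1).factorial)) / ((a:ℝ)+1) := by
      field_simp at key ⊢
      linarith [key]
    rw [h2]
    have e1 : (a+1+b+1) = (a+(b+1)+1) := by omega
    rw [e1, Nat.factorial_succ a, Nat.factorial_succ b]
    push_cast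
    field_simp

lemma bern_integral (n k : ℕ) (hk : k ≤ n) :
    (∫ t in (0:ℝ)..1, bern n (k:ℤ) t) = 1 / ((n:ℝ)+1) := by
  have hb : ∀ t : ℝ, bern n (k:ℤ) t = (n.choose k : ℝ) * (t ^ k * (1 - t) ^ (n - k)) := by
    intro t
    rw [bern, if_pos ⟨Int.ofNat_nonneg k, by exact_mod_cast hk⟩]
    simp [mul_assoc]
  simp only [hb]
  rw [intervalIntegral.integral_const_mul, beta_nat]
  have e1 : k + (n-k) + 1 = n + 1 := by omega
  rw [e1]
  have h2 : (n.choose k : ℝ) * (k.factorial * (n-k).factorial) = n.factorial := by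
    exact_mod_cast congrArg (Nat.cast : ℕ → ℝ)
      (by rw [← mul_assoc]; exact Nat.choose_mul_factorial_mul_factorial hk)
  rw [← mul_div_assoc, h2, Nat.factorial_succ]
  push_cast
  rw [div_mul_eq_div_div_swap, div_self (by positivity : (Nat.factorial n : ℝ) ≠ 0)]

lemma bern_sum (m : ℕ) (x : ℝ) :
    ∑ k ∈ Finset.range (m+1), bern m (k:ℤ) x = 1 := by
  have : ∀ k ∈ Finset.range (m+1), bern m (k:ℤ) x
      = x ^ k * (1-x) ^ (m-k) * (m.choose k : ℝ) := by
    intro k hk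
    rw [Finset.mem_range] at hk
    rw [bern, if_pos ⟨Int.ofNat_nonneg k, by exact_mod_cast Nat.lt_succ_iff.mp hk⟩]
    simp; ring
  rw [Finset.sum_congr rfl this, ← add_pow]
  simp

theorem DM1_moment_e0 (a0 a1 : ℕ → ℝ) (n : ℕ) (hn : 1 ≤ n)
    (x : ℝ) (hx : x ∈ Set.Icc (0:ℝ) 1) :
    DM1 a0 a1 n (fun _ => 1) x = 2 * a0 n + a1 n := by
  obtain ⟨m, rfl⟩ : ∃ m, n = m + 1 := ⟨n - 1, by omega⟩
  unfold DM1
  have hstep : ∀ k ∈ Finset.range (m+1+1),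
      pM1 a0 a1 (m+1) (k:ℤ) x * (∫ t in (0:ℝ)..1, bern (m+1) (k:ℤ) t * (fun _ => (1:ℝ)) t)
        = pM1 a0 a1 (m+1) (k:ℤ) x * (1/((m:ℝ)+1+1)) := by
    intro k hk
    rw [Finset.mem_range] at hk
    simp only [mul_one]
    rw [bern_integral (m+1) k (by omega)]
    push_cast; ring_nf
  rw [Finset.sum_congr rfl hstep, ← Finset.sum_mul]
  have hS1 : ∑ k ∈ Finset.range (m+1+1), bern m (k:ℤ) x = 1 := by
    rw [Finset.sum_range_succ, bern_sum]
    have : bern m ((m+1 : ℕ) : ℤ) x = 0 := by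
      rw [bern, if_neg]; push_cast; omega
    rw [this, add_zero]
  have hS2 : ∑ k ∈ Finset.range (m+1+1), bern m ((k:ℤ)-1) x = 1 := by
    rw [Finset.sum_range_succ']
    have h0 : bern m (((0:ℕ):ℤ)-1) x = 0 := by
      rw [bern, if_neg]; omega
    have he : ∀ i, bern m (((i+1:ℕ):ℤ)-1) x = bern m (i:ℤ) x := by
      intro i; congr 1; push_cast; ring
    simp only [he, h0, add_zero]
    exact bern_sum m x
  have hS : ∑ k ∈ Finset.range (m+1+1), pM1 a0 a1 (m+1) (k:ℤ) x
      = 2 * a0 (m+1) + a1 (m+1) := by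
    simp only [pM1, Nat.add_sub_cancel, Finset.sum_add_distrib, ← Finset.mul_sum, hS1, hS2]
    ring
  rw [hS]
  push_cast
  field_simp
end

section
/- For every n ≥ 1 and every x ∈ [0,1], the modified Durrmeyer operator satisfies D_n^{M,1}(e_2; x) = (a_1(n) + 2a_0(n)) x^2 − [(8x^2 − 5x)a_0(n) + (5x^2 − 3x)a_1(n)] · 2n/((n+2)(n+3)) − 2[(x^2 + 5x − 3)a_1(n) + (4x^2 + 5x − 4)a_0(n)]/((n+2)(n+3)), where e_2(t) = t^2. -/
open Filter Topology

lemma integral_pow_mul_one_sub (a b : ℕ) :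
    ∫ x in (0:ℝ)..1, x ^ a * (1 - x) ^ b
      = (a.factorial * b.factorial : ℝ) / (a + b + 1).factorial := by
  induction b generalizing a with
  | zero =>
    simp only [pow_zero, mul_one, integral_pow, Nat.factorial_zero, Nat.add_zero,
      Nat.factorial_succ]
    push_cast
    have : (a:ℝ) + 1 ≠ 0 := by positivity
    have hfa : (a.factorial : ℝ) ≠ 0 := by positivity
    field_simp
    try ring
  | succ b ih =>
    have hA : ((a:ℝ) + 1) ≠ 0 := by positivity
    have parts := intervalIntegral.integral_mul_deriv_eq_deriv_mul
      (u := fun x : ℝ => (1 - x) ^ (b + 1))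
      (u' := fun x : ℝ => -(((b:ℝ) + 1) * (1 - x) ^ b))
      (v := fun x : ℝ => x ^ (a + 1) / ((a:ℝ) + 1))
      (v' := fun x : ℝ => x ^ a) (a := (0:ℝ)) (b := (1:ℝ))
      (fun x _ => by
        have h1 : HasDerivAt (fun x : ℝ => 1 - x) (-1) x := (hasDerivAt_id x).const_sub 1
        have : HasDerivAt (fun x : ℝ => (1 - x) ^ (b + 1))
            (((b + 1 : ℕ) : ℝ) * (1 - x) ^ b * -1) x := h1.pow (b + 1)
        refine this.congr_deriv ?_
        push_cast
        ring_nf)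
      (fun x _ => by
        have := (hasDerivAt_pow (a + 1) x).div_const ((a:ℝ) + 1)
        convert this using 1
        push_cast
        try field_simp)
      (by apply Continuous.intervalIntegrable; continuity)
      (by apply Continuous.intervalIntegrable; continuity)
    have comm : ∀ x : ℝ, x ^ a * (1 - x) ^ (b + 1) = (1 - x) ^ (b + 1) * x ^ a := fun x => by ring
    simp_rw [comm]
    rw [parts]
    have point : ∀ x : ℝ, -(((b:ℝ) + 1) * (1 - x) ^ b) * (x ^ (a + 1) / ((a:ℝ) + 1))
        = (-(((b:ℝ) + 1) / ((a:ℝ) + 1))) * (x ^ (a + 1) * (1 - x) ^ b) := fun x => by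
      field_simp
    simp_rw [point]
    rw [intervalIntegral.integral_const_mul, ih (a + 1)]
    have he : a + 1 + b + 1 = a + (b + 1) + 1 := by omega
    rw [he]
    simp only [Nat.factorial_succ]
    have hfa : (a.factorial : ℝ) ≠ 0 := by positivity
    have hfb : (b.factorial : ℝ) ≠ 0 := by positivity
    have hD : ((a + (b+1) + 1).factorial : ℝ) ≠ 0 := by positivity
    push_cast
    field_simp
    ring

lemma bern_sum0 (m : ℕ) (x : ℝ) :
    ∑ j ∈ Finset.range (m + 1), (m.choose j : ℝ) * x ^ j * (1 - x) ^ (m - j) = 1 := by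
  have h := congrArg (Polynomial.eval x) (bernsteinPolynomial.sum ℝ m)
  simpa [bernsteinPolynomial, Polynomial.eval_finset_sum, mul_comm] using h

lemma bern_sum1 (m : ℕ) (x : ℝ) :
    ∑ j ∈ Finset.range (m + 1), (j : ℝ) * ((m.choose j : ℝ) * x ^ j * (1 - x) ^ (m - j))
      = (m : ℝ) * x := by
  have h := congrArg (Polynomial.eval x) (bernsteinPolynomial.sum_smul ℝ m)
  simpa [bernsteinPolynomial, Polynomial.eval_finset_sum, mul_comm, mul_assoc,
    mul_left_comm] using h

lemma bern_sum2 (m : ℕ) (x : ℝ) :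
    ∑ j ∈ Finset.range (m + 1),
        (j : ℝ) * ((j : ℝ) - 1) * ((m.choose j : ℝ) * x ^ j * (1 - x) ^ (m - j))
      = (m : ℝ) * ((m : ℝ) - 1) * x ^ 2 := by
  have h := congrArg (Polynomial.eval x) (bernsteinPolynomial.sum_mul_smul ℝ m)
  simp only [Polynomial.eval_finset_sum, Polynomial.eval_smul, Polynomial.eval_mul,
    Polynomial.eval_pow, Polynomial.eval_sub, Polynomial.eval_one, Polynomial.eval_X,
    smul_eq_mul, nsmul_eq_mul, bernsteinPolynomial, Polynomial.eval_natCast] at h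
  have hcast : ∀ j : ℕ, ((j * (j - 1) : ℕ) : ℝ) = (j : ℝ) * ((j : ℝ) - 1) := by
    intro j
    cases j with
    | zero => simp
    | succ i => push_cast [Nat.succ_sub_one]; ring
  rw [show ((m:ℝ) * ((m:ℝ) - 1) * x ^ 2) = ((m * (m-1) : ℕ):ℝ) * x ^ 2 by rw [hcast]]
  rw [← h]
  refine Finset.sum_congr rfl fun j _ => ?_
  try rw [hcast]
  try ring

/-- Combined quadratic moment for the Bernstein basis. -/
lemma bern_key (m : ℕ) (x : ℝ) (c d e : ℝ) :
    ∑ j ∈ Finset.range (m + 1),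
        (c * ((j:ℝ) * ((j:ℝ) - 1)) + d * (j:ℝ) + e)
          * ((m.choose j : ℝ) * x ^ j * (1 - x) ^ (m - j))
      = c * ((m:ℝ) * ((m:ℝ) - 1) * x ^ 2) + d * ((m:ℝ) * x) + e := by
  have expand : ∀ j ∈ Finset.range (m + 1),
      (c * ((j:ℝ) * ((j:ℝ) - 1)) + d * (j:ℝ) + e)
          * ((m.choose j : ℝ) * x ^ j * (1 - x) ^ (m - j))
        = c * ((j:ℝ) * ((j:ℝ) - 1) * ((m.choose j : ℝ) * x ^ j * (1 - x) ^ (m - j)))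
          + (d * ((j:ℝ) * ((m.choose j : ℝ) * x ^ j * (1 - x) ^ (m - j)))
          + e * ((m.choose j : ℝ) * x ^ j * (1 - x) ^ (m - j))) := fun j _ => by ring
  rw [Finset.sum_congr rfl expand, Finset.sum_add_distrib, Finset.sum_add_distrib,
    ← Finset.mul_sum, ← Finset.mul_sum, ← Finset.mul_sum,
    bern_sum0, bern_sum1, bern_sum2]
  ring

lemma bern_eq (M k : ℕ) (hk : k ≤ M) (x : ℝ) :
    bern M (k : ℤ) x = (M.choose k : ℝ) * x ^ k * (1 - x) ^ (M - k) := by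
  rw [bern, if_pos ⟨Int.ofNat_nonneg k, by exact_mod_cast hk⟩]
  simp

theorem DM1_moment_e2 (a0 a1 : ℕ → ℝ) (n : ℕ) (hn : 1 ≤ n)
    (x : ℝ) (hx : x ∈ Set.Icc (0:ℝ) 1) :
    DM1 a0 a1 n (fun t => t ^ 2) x
      = (a1 n + 2 * a0 n) * x ^ 2
        - ((8 * x ^ 2 - 5 * x) * a0 n + (5 * x ^ 2 - 3 * x) * a1 n)
            * (2 * (n : ℝ)) / (((n : ℝ) + 2) * ((n : ℝ) + 3))
        - 2 * ((x ^ 2 + 5 * x - 3) * a1 n + (4 * x ^ 2 + 5 * x - 4) * a0 n)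
            / (((n : ℝ) + 2) * ((n : ℝ) + 3)) := by
  obtain ⟨m, rfl⟩ : ∃ m, n = m + 1 := ⟨n - 1, (Nat.succ_pred_eq_of_pos hn).symm⟩
  set D : ℝ := ((m:ℝ) + 2) * ((m:ℝ) + 3) * ((m:ℝ) + 4) with hD
  -- the value of the integrals
  have hint : ∀ k ∈ Finset.range (m + 2),
      (∫ t in (0:ℝ)..1, bern (m + 1) (k : ℤ) t * t ^ 2)
        = ((k:ℝ) + 1) * ((k:ℝ) + 2) / D := by
    intro k hk
    have hk' : k ≤ m + 1 := by
      have := Finset.mem_range.mp hk; omega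
    have hpt : ∀ t : ℝ, bern (m + 1) (k : ℤ) t * t ^ 2
        = ((m + 1).choose k : ℝ) * (t ^ (k + 2) * (1 - t) ^ (m + 1 - k)) := by
      intro t
      rw [bern_eq (m + 1) k hk' t]
      ring
    simp_rw [hpt]
    rw [intervalIntegral.integral_const_mul, integral_pow_mul_one_sub]
    have hidx : k + 2 + (m + 1 - k) + 1 = m + 4 := by omega
    rw [hidx]
    have hnat : (m + 1).choose k * ((k + 2).factorial * (m + 1 - k).factorial)
        = (k + 1) * (k + 2) * (m + 1).factorial := by
      rw [show (k + 2).factorial = (k + 2) * ((k + 1) * k.factorial) by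
        rw [show k + 2 = k + 1 + 1 from rfl, Nat.factorial_succ, Nat.factorial_succ]]
      rw [← Nat.choose_mul_factorial_mul_factorial hk']
      ring
    have hnat' : ((m + 1).choose k : ℝ) * (((k + 2).factorial : ℝ) * ((m + 1 - k).factorial : ℝ))
        = ((k:ℝ) + 1) * ((k:ℝ) + 2) * ((m + 1).factorial : ℝ) := by
      exact_mod_cast congrArg (Nat.cast : ℕ → ℝ) hnat
    have e4 : ((m + 4).factorial : ℝ)
        = ((m:ℝ) + 4) * (((m:ℝ) + 3) * (((m:ℝ) + 2) * ((m + 1).factorial : ℝ))) := by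
      rw [show m + 4 = m + 3 + 1 from rfl, Nat.factorial_succ,
        show m + 3 = m + 2 + 1 from rfl, Nat.factorial_succ,
        show m + 2 = m + 1 + 1 from rfl, Nat.factorial_succ]
      push_cast
      ring
    rw [e4, hD]
    have h1 : ((m + 1).factorial : ℝ) ≠ 0 := by positivity
    have h2 : ((m:ℝ) + 2) ≠ 0 := by positivity
    have h3 : ((m:ℝ) + 3) ≠ 0 := by positivity
    have h4 : ((m:ℝ) + 4) ≠ 0 := by positivity
    rw [← mul_div_assoc, div_eq_div_iff (by positivity) (by positivity)]
    linear_combination (((m:ℝ) + 2) * ((m:ℝ) + 3) * ((m:ℝ) + 4)) * hnat'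
  -- rewrite the operator
  rw [DM1]
  rw [Finset.sum_congr rfl fun k hk => by rw [hint k hk]]
  simp only [pM1, Nat.add_sub_cancel]
  -- split the sum
  have split : ∑ k ∈ Finset.range (m + 1 + 1),
      ((a1 (m+1) * x + a0 (m+1)) * bern m (k:ℤ) x
        + (a1 (m+1) * (1 - x) + a0 (m+1)) * bern m ((k:ℤ) - 1) x)
        * (((k:ℝ) + 1) * ((k:ℝ) + 2) / D)
      = (a1 (m+1) * x + a0 (m+1))
          * ∑ k ∈ Finset.range (m + 2), bern m (k:ℤ) x * (((k:ℝ) + 1) * ((k:ℝ) + 2) / D)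
        + (a1 (m+1) * (1 - x) + a0 (m+1))
          * ∑ k ∈ Finset.range (m + 2), bern m ((k:ℤ) - 1) x
              * (((k:ℝ) + 1) * ((k:ℝ) + 2) / D) := by
    rw [Finset.mul_sum, Finset.mul_sum, ← Finset.sum_add_distrib]
    exact Finset.sum_congr rfl fun k _ => by ring
  rw [split]
  -- first inner sum
  have T1 : ∑ k ∈ Finset.range (m + 2), bern m (k:ℤ) x * (((k:ℝ) + 1) * ((k:ℝ) + 2) / D)
      = (1/D) * ((m:ℝ) * ((m:ℝ) - 1) * x ^ 2) + (4/D) * ((m:ℝ) * x) + 2/D := by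
    rw [show m + 2 = (m + 1) + 1 from rfl, Finset.sum_range_succ]
    have hlast : bern m ((m + 1 : ℕ) : ℤ) x = 0 := by
      rw [bern, if_neg]
      push_cast
      omega
    rw [hlast, zero_mul, add_zero]
    rw [Finset.sum_congr rfl fun k hk => by
      rw [bern_eq m k (by have := Finset.mem_range.mp hk; omega) x]]
    rw [← bern_key m x (1/D) (4/D) (2/D)]
    exact Finset.sum_congr rfl fun k _ => by ring
  -- second inner sum
  have T2 : ∑ k ∈ Finset.range (m + 2), bern m ((k:ℤ) - 1) x * (((k:ℝ) + 1) * ((k:ℝ) + 2) / D)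
      = (1/D) * ((m:ℝ) * ((m:ℝ) - 1) * x ^ 2) + (6/D) * ((m:ℝ) * x) + 6/D := by
    rw [show m + 2 = (m + 1) + 1 from rfl, Finset.sum_range_succ']
    have hfirst : bern m (((0:ℕ):ℤ) - 1) x = 0 := by
      rw [bern, if_neg]
      simp
    rw [hfirst, zero_mul, add_zero]
    have step : ∀ k ∈ Finset.range (m + 1),
        bern m (((k + 1 : ℕ):ℤ) - 1) x * (((k + 1 : ℕ):ℝ) + 1) * (((k + 1 : ℕ):ℝ) + 2)
          = bern m (k:ℤ) x * (((k:ℝ) + 2) * ((k:ℝ) + 3)) := by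
      intro k hk
      have : ((k + 1 : ℕ):ℤ) - 1 = (k:ℤ) := by push_cast; ring
      rw [this]
      push_cast
      ring
    rw [Finset.sum_congr rfl fun k hk => by
      have h1 : ((k + 1 : ℕ):ℤ) - 1 = (k:ℤ) := by push_cast; ring
      rw [h1, bern_eq m k (by have := Finset.mem_range.mp hk; omega) x]]
    rw [← bern_key m x (1/D) (6/D) (6/D)]
    refine Finset.sum_congr rfl fun k _ => ?_
    push_cast
    ring
  rw [T1, T2]
  -- final algebra
  have h2 : ((m:ℝ) + 2) ≠ 0 := by positivity
  have h3 : ((m:ℝ) + 3) ≠ 0 := by positivity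
  have h4 : ((m:ℝ) + 4) ≠ 0 := by positivity
  have hDne : D ≠ 0 := by rw [hD]; positivity
  push_cast
  rw [hD]
  field_simp
  ring
end

section
/- Let f ∈ C[0,1]. If the sequences a_0(n), a_1(n) satisfy 2a_0(n) + a_1(n) = 1, a_0(n) ≥ 0, and a_0(n) + a_1(n) ≥ 0 for all n, then D_n^{M,1}(f; x) converges to f(x) uniformly on [0,1] as n → ∞. -/
open Filter Topology intervalIntegral

lemma bern_nat (n k : ℕ) (hk : k ≤ n) (x : ℝ) :
    bern n (k : ℤ) x = (n.choose k : ℝ) * x ^ k * (1 - x) ^ (n - k) := by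
  simp [bern, hk, Int.toNat_natCast]

lemma bern_neg (n : ℕ) (x : ℝ) : bern n (-1) x = 0 := by simp [bern]

lemma bern_of_gt (n : ℕ) (k : ℕ) (hk : n < k) (x : ℝ) : bern n (k : ℤ) x = 0 := by
  simp [bern]; omega

lemma bern_continuous (n : ℕ) (k : ℤ) : Continuous (bern n k) := by
  unfold bern
  by_cases h : 0 ≤ k ∧ k ≤ (n : ℤ) <;> simp [h] <;> continuity

lemma bern_nonneg (n : ℕ) (k : ℤ) {x : ℝ} (h0 : 0 ≤ x) (h1 : x ≤ 1) : 0 ≤ bern n k x := by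
  unfold bern
  by_cases h : 0 ≤ k ∧ k ≤ (n : ℤ)
  · rw [if_pos h]
    exact mul_nonneg (mul_nonneg (by positivity) (pow_nonneg h0 _))
      (pow_nonneg (by linarith) _)
  · rw [if_neg h]

lemma betaNat_step (a b : ℕ) :
    ((b:ℝ)+1) * ∫ t in (0:ℝ)..1, t^(a+1) * (1-t)^b
      = ((a:ℝ)+1) * ∫ t in (0:ℝ)..1, t^a * (1-t)^(b+1) := by
  have hderiv : ∀ t : ℝ, HasDerivAt (fun t : ℝ => t^(a+1) * (1-t)^(b+1))
      (((a:ℝ)+1) * t^a * (1-t)^(b+1) - ((b:ℝ)+1) * (1-t)^b * t^(a+1)) t := by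
    intro t
    have h1 : HasDerivAt (fun t : ℝ => t^(a+1)) (((a:ℝ)+1) * t^a) t := by
      simpa using (hasDerivAt_pow (a+1) t)
    have h2 : HasDerivAt (fun t : ℝ => (1-t)^(b+1)) (-(((b:ℝ)+1) * (1-t)^b)) t := by
      have h3 : HasDerivAt (fun t : ℝ => 1 - t) (-1) t := by
        simpa using (hasDerivAt_id t).const_sub 1
      simpa [mul_comm, Function.comp_def] using ((hasDerivAt_pow (b+1) (1-t)).comp t h3)
    have := h1.fun_mul h2
    refine this.congr_deriv ?_
    push_cast
    ring
  have hint : ∫ t in (0:ℝ)..1, (((a:ℝ)+1) * t^a * (1-t)^(b+1) - ((b:ℝ)+1) * (1-t)^b * t^(a+1))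
      = 0 := by
    rw [integral_eq_sub_of_hasDerivAt (fun t _ => hderiv t)]
    · norm_num
    · apply Continuous.intervalIntegrable
      continuity
  have i1 : IntervalIntegrable (fun t : ℝ => ((a:ℝ)+1) * (t^a * (1-t)^(b+1))) MeasureTheory.volume 0 1 := by
    apply Continuous.intervalIntegrable; continuity
  have i2 : IntervalIntegrable (fun t : ℝ => ((b:ℝ)+1) * ((1-t)^b * t^(a+1))) MeasureTheory.volume 0 1 := by
    apply Continuous.intervalIntegrable; continuity
  have := intervalIntegral.integral_sub
    (f := fun t : ℝ => ((a:ℝ)+1) * (t^a * (1-t)^(b+1)))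
    (g := fun t : ℝ => ((b:ℝ)+1) * ((1-t)^b * t^(a+1))) i1 i2
  rw [intervalIntegral.integral_const_mul, intervalIntegral.integral_const_mul] at this
  have heq : (∫ t in (0:ℝ)..1, (((a:ℝ)+1) * (t^a * (1-t)^(b+1)) - ((b:ℝ)+1) * ((1-t)^b * t^(a+1)))) = 0 := by
    rw [← hint]; congr 1; ext t; ring
  rw [heq] at this
  have h4 : (∫ t in (0:ℝ)..1, (1-t)^b * t^(a+1)) = ∫ t in (0:ℝ)..1, t^(a+1) * (1-t)^b := by
    congr 1; ext t; ring
  rw [h4] at this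
  linarith

lemma betaNat (a b : ℕ) :
    ∫ t in (0:ℝ)..1, t^a * (1-t)^b
      = (a.factorial * b.factorial : ℝ) / ((a+b+1).factorial) := by
  induction a generalizing b with
  | zero =>
      simp only [pow_zero, one_mul, Nat.factorial_zero, Nat.cast_one, zero_add]
      have h := intervalIntegral.integral_comp_sub_left (a := (0:ℝ)) (b := 1)
        (fun t : ℝ => t^b) 1
      norm_num at h
      rw [h, Nat.factorial_succ]
      have hbf : (b.factorial : ℝ) ≠ 0 := Nat.cast_ne_zero.mpr (Nat.factorial_ne_zero _)
      push_cast
      field_simp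
  | succ a ih =>
      have step := betaNat_step a b
      rw [ih (b+1)] at step
      have hb1 : ((b:ℝ)+1) ≠ 0 := by positivity
      have hf1 : ((a+(b+1)+1).factorial : ℝ) ≠ 0 := by
        exact Nat.cast_ne_zero.mpr (Nat.factorial_ne_zero _)
      have hf2 : ((a+1+b+1).factorial : ℝ) ≠ 0 := by
        exact Nat.cast_ne_zero.mpr (Nat.factorial_ne_zero _)
      have key : (∫ t in (0:ℝ)..1, t^(a+1)*(1-t)^b)
          = ((a:ℝ)+1) * ((a.factorial * (b+1).factorial : ℝ) / ((a+(b+1)+1).factorial)) / ((b:ℝ)+1) := by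
        field_simp at step ⊢
        linarith
      rw [key, Nat.factorial_succ b, show a+(b+1)+1 = a+1+b+1 by omega, Nat.factorial_succ a]
      push_cast
      field_simp

lemma mom (n k p : ℕ) (hk : k ≤ n) :
    ∫ t in (0:ℝ)..1, bern n (k:ℤ) t * t^p
      = (n.choose k : ℝ) * ((k+p).factorial * (n-k).factorial) / ((n+p+1).factorial) := by
  have hb : ∀ t : ℝ, bern n (k:ℤ) t * t^p
      = (n.choose k : ℝ) * (t^(k+p) * (1-t)^(n-k)) := by
    intro t; rw [bern_nat n k hk]; ring
  simp only [hb]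
  rw [intervalIntegral.integral_const_mul, betaNat]
  rw [show k+p+(n-k)+1 = n+p+1 by omega]
  ring

lemma fac_ne (j : ℕ) : ((j.factorial : ℝ)) ≠ 0 := Nat.cast_ne_zero.mpr (Nat.factorial_ne_zero _)

lemma choose_id (n k : ℕ) (hk : k ≤ n) :
    (n.choose k : ℝ) * k.factorial * (n-k).factorial = n.factorial := by
  exact_mod_cast congrArg (Nat.cast : ℕ → ℝ) (Nat.choose_mul_factorial_mul_factorial hk)

lemma mom0 (n k : ℕ) (hk : k ≤ n) :
    ∫ t in (0:ℝ)..1, bern n (k:ℤ) t = 1 / ((n:ℝ)+1) := by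
  have h := mom n k 0 hk
  simp only [pow_zero, mul_one] at h
  rw [h, show n+0+1 = n+1 from by omega, Nat.add_zero,
    show (n+1).factorial = (n+1) * n.factorial from Nat.factorial_succ n]
  have hc := choose_id n k hk
  have := fac_ne n; have := fac_ne k; have := fac_ne (n-k)
  have hn1 : ((n:ℝ)+1) ≠ 0 := by positivity
  push_cast
  field_simp
  linear_combination hc

lemma mom1 (n k : ℕ) (hk : k ≤ n) :
    ∫ t in (0:ℝ)..1, bern n (k:ℤ) t * t
      = ((k:ℝ)+1) / (((n:ℝ)+1)*((n:ℝ)+2)) := by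
  have h := mom n k 1 hk
  simp only [pow_one] at h
  rw [h, show (k+1).factorial = (k+1) * k.factorial from Nat.factorial_succ k,
    show (n+1+1).factorial = (n+2) * ((n+1) * n.factorial) from by
      rw [show n+1+1 = (n+1)+1 from rfl, Nat.factorial_succ, Nat.factorial_succ]]
  have hc := choose_id n k hk
  have := fac_ne n; have := fac_ne k; have := fac_ne (n-k)
  have hn1 : ((n:ℝ)+1) ≠ 0 := by positivity
  have hn2 : ((n:ℝ)+2) ≠ 0 := by positivity
  push_cast
  field_simp
  linear_combination hc

lemma mom2 (n k : ℕ) (hk : k ≤ n) :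
    ∫ t in (0:ℝ)..1, bern n (k:ℤ) t * t^2
      = ((k:ℝ)+1) * ((k:ℝ)+2) / (((n:ℝ)+1)*((n:ℝ)+2)*((n:ℝ)+3)) := by
  have h := mom n k 2 hk
  rw [h, show (k+2).factorial = (k+2) * ((k+1) * k.factorial) from by
      rw [show k+2 = (k+1)+1 from rfl, Nat.factorial_succ, Nat.factorial_succ],
    show (n+2+1).factorial = (n+3) * ((n+2) * ((n+1) * n.factorial)) from by
      rw [show n+2+1 = ((n+1)+1)+1 from rfl, Nat.factorial_succ, Nat.factorial_succ,
        Nat.factorial_succ]]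
  have hc := choose_id n k hk
  have := fac_ne n; have := fac_ne k; have := fac_ne (n-k)
  have hn1 : ((n:ℝ)+1) ≠ 0 := by positivity
  have hn2 : ((n:ℝ)+2) ≠ 0 := by positivity
  have hn3 : ((n:ℝ)+3) ≠ 0 := by positivity
  push_cast
  field_simp
  linear_combination hc

noncomputable def M2 (n k x : ℝ) : ℝ :=
  (k+1)*(k+2)/((n+2)*(n+3)) - 2*x*(k+1)/(n+2) + x^2

lemma moment_sq (n k : ℕ) (hk : k ≤ n) (x : ℝ) :
    ((n:ℝ)+1) * ∫ t in (0:ℝ)..1, bern n (k:ℤ) t * (t-x)^2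
      = M2 n k x := by
  have i0 : IntervalIntegrable (fun t : ℝ => bern n (k:ℤ) t) MeasureTheory.volume 0 1 :=
    (bern_continuous n k).intervalIntegrable 0 1
  have i1 : IntervalIntegrable (fun t : ℝ => bern n (k:ℤ) t * t) MeasureTheory.volume 0 1 :=
    ((bern_continuous n k).mul continuous_id).intervalIntegrable 0 1
  have i2 : IntervalIntegrable (fun t : ℝ => bern n (k:ℤ) t * t^2) MeasureTheory.volume 0 1 :=
    ((bern_continuous n k).mul (continuous_pow 2)).intervalIntegrable 0 1
  have expand : (∫ t in (0:ℝ)..1, bern n (k:ℤ) t * (t-x)^2)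
      = (∫ t in (0:ℝ)..1, bern n (k:ℤ) t * t^2)
        - 2*x*(∫ t in (0:ℝ)..1, bern n (k:ℤ) t * t)
        + x^2 * (∫ t in (0:ℝ)..1, bern n (k:ℤ) t) := by
    rw [← intervalIntegral.integral_const_mul, ← intervalIntegral.integral_const_mul,
      ← intervalIntegral.integral_sub i2 (i1.const_mul _),
      ← intervalIntegral.integral_add (i2.sub (i1.const_mul _)) (i0.const_mul _)]
    congr 1; ext t; ring
  rw [expand, mom0 n k hk, mom1 n k hk, mom2 n k hk, M2]
  have hn1 : ((n:ℝ)+1) ≠ 0 := by positivity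
  have hn2 : ((n:ℝ)+2) ≠ 0 := by positivity
  have hn3 : ((n:ℝ)+3) ≠ 0 := by positivity
  field_simp

lemma bern_eval (m j : ℕ) (hj : j ≤ m) (x : ℝ) :
    bern m (j:ℤ) x = Polynomial.eval x (bernsteinPolynomial ℝ m j) := by
  rw [bern_nat m j hj, bernsteinPolynomial]
  simp

lemma sumS0 (m : ℕ) (x : ℝ) :
    ∑ j ∈ Finset.range (m+1), bern m (j:ℤ) x = 1 := by
  have h := congrArg (Polynomial.eval x) (bernsteinPolynomial.sum ℝ m)
  rw [Polynomial.eval_finset_sum] at h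
  simp only [Polynomial.eval_one] at h
  rw [← h]
  exact Finset.sum_congr rfl fun j hj =>
    bern_eval m j (Nat.lt_succ_iff.mp (Finset.mem_range.mp hj)) x

lemma sumS1 (m : ℕ) (x : ℝ) :
    ∑ j ∈ Finset.range (m+1), (j:ℝ) * bern m (j:ℤ) x = (m:ℝ) * x := by
  have h := congrArg (Polynomial.eval x) (bernsteinPolynomial.sum_smul ℝ m)
  rw [Polynomial.eval_finset_sum] at h
  simp only [Polynomial.eval_smul, Polynomial.eval_mul, Polynomial.eval_natCast, Polynomial.eval_X, nsmul_eq_mul] at h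
  rw [← h]
  exact Finset.sum_congr rfl fun j hj => by
    rw [bern_eval m j (Nat.lt_succ_iff.mp (Finset.mem_range.mp hj)) x]

lemma sumS2 (m : ℕ) (x : ℝ) :
    ∑ j ∈ Finset.range (m+1), (j:ℝ) * ((j:ℝ) - 1) * bern m (j:ℤ) x
      = (m:ℝ) * ((m:ℝ) - 1) * x^2 := by
  have h := congrArg (Polynomial.eval x) (bernsteinPolynomial.sum_mul_smul ℝ m)
  rw [Polynomial.eval_finset_sum] at h
  simp only [Polynomial.eval_smul, Polynomial.eval_mul, Polynomial.eval_natCast, Polynomial.eval_pow, Polynomial.eval_X, nsmul_eq_mul] at h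
  have cast_id : ∀ j : ℕ, ((j * (j-1) : ℕ) : ℝ) = (j:ℝ) * ((j:ℝ) - 1) := by
    intro j
    cases j with
    | zero => simp
    | succ i => push_cast [Nat.succ_sub_one]; ring
  rw [← cast_id m, ← h]
  exact Finset.sum_congr rfl fun j hj => by
    rw [bern_eval m j (Nat.lt_succ_iff.mp (Finset.mem_range.mp hj)) x, cast_id j]

lemma sum_M2_bound (m : ℕ) (i x : ℝ) (hi0 : 0 ≤ i) (hi1 : i ≤ 1)
    (hx0 : 0 ≤ x) (hx1 : x ≤ 1) :
    ∑ j ∈ Finset.range (m+1), bern m (j:ℤ) x * M2 ((m:ℝ)+1) ((j:ℝ)+i) x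
      ≤ ((m:ℝ)/2+21)/(((m:ℝ)+3)*((m:ℝ)+4)) := by
  set M : ℝ := (m:ℝ) with hM
  have hM0 : (0:ℝ) ≤ M := Nat.cast_nonneg m
  have h3 : M + 3 ≠ 0 := by positivity
  have h4 : M + 4 ≠ 0 := by positivity
  set A : ℝ := 1/((M+3)*(M+4)) with hA
  set B : ℝ := (2*i+4)/((M+3)*(M+4)) - 2*x/(M+3) with hB
  set C : ℝ := ((i+1)*(i+2))/((M+3)*(M+4)) - 2*x*(i+1)/(M+3) + x^2 with hC
  have step : ∑ j ∈ Finset.range (m+1), bern m (j:ℤ) x * M2 ((m:ℝ)+1) ((j:ℝ)+i) x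
      = A * (M*(M-1)*x^2) + B * (M*x) + C := by
    have congr1 : ∀ j ∈ Finset.range (m+1),
        bern m (j:ℤ) x * M2 ((m:ℝ)+1) ((j:ℝ)+i) x
          = A * ((j:ℝ)*((j:ℝ)-1) * bern m (j:ℤ) x) + B * ((j:ℝ) * bern m (j:ℤ) x)
            + C * bern m (j:ℤ) x := by
      intro j _
      rw [M2, hA, hB, hC]
      field_simp
      ring
    rw [Finset.sum_congr rfl congr1, Finset.sum_add_distrib, Finset.sum_add_distrib,
      ← Finset.mul_sum, ← Finset.mul_sum, ← Finset.mul_sum, sumS0, sumS1, sumS2, mul_one]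
  rw [step]
  have key : ((M/2+21)/((M+3)*(M+4))) - (A * (M*(M-1)*x^2) + B * (M*x) + C)
      = ((M/2+21) - ((12-2*M)*x^2 + (2*M-8*i-8)*x + (i+1)*(i+2))) / ((M+3)*(M+4)) := by
    rw [hA, hB, hC]
    field_simp
    ring
  have hD : 0 ≤ (M/2+21) - ((12-2*M)*x^2 + (2*M-8*i-8)*x + (i+1)*(i+2)) := by
    nlinarith [mul_nonneg hM0 (sq_nonneg (2*x-1)), mul_nonneg (mul_nonneg hi0 hx0) hM0,
      mul_nonneg hi0 hx0, sq_nonneg x, mul_nonneg hi0 hi0, mul_nonneg hx0 hx0]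
  have hpos : (0:ℝ) < (M+3)*(M+4) := by positivity
  have := div_nonneg hD (le_of_lt hpos)
  linarith [key ▸ this]

lemma ck_est (n k : ℕ) (hk : k ≤ n) (f : ℝ → ℝ) (hf : ContinuousOn f (Set.Icc 0 1))
    (x : ℝ) (hx : x ∈ Set.Icc (0:ℝ) 1) (e κ : ℝ) (hκ : 0 ≤ κ)
    (hpt : ∀ t ∈ Set.Icc (0:ℝ) 1, |f t - f x| ≤ e + κ*(t-x)^2) :
    |((n:ℝ)+1) * (∫ t in (0:ℝ)..1, bern n (k:ℤ) t * f t) - f x|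
      ≤ e + κ * M2 (n:ℝ) (k:ℝ) x := by
  have hIcc : Set.uIcc (0:ℝ) 1 = Set.Icc 0 1 := Set.uIcc_of_le zero_le_one
  have hbc := bern_continuous n (k:ℤ)
  have hb : IntervalIntegrable (fun t : ℝ => bern n (k:ℤ) t) MeasureTheory.volume 0 1 :=
    hbc.intervalIntegrable 0 1
  have hbf : IntervalIntegrable (fun t : ℝ => bern n (k:ℤ) t * f t) MeasureTheory.volume 0 1 := by
    apply ContinuousOn.intervalIntegrable
    rw [hIcc]
    exact hbc.continuousOn.mul hf
  have hbd : IntervalIntegrable (fun t : ℝ => bern n (k:ℤ) t * (f t - f x))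
      MeasureTheory.volume 0 1 := by
    apply ContinuousOn.intervalIntegrable
    rw [hIcc]
    exact hbc.continuousOn.mul (hf.sub continuousOn_const)
  have hbd' : IntervalIntegrable (fun t : ℝ => |bern n (k:ℤ) t * (f t - f x)|)
      MeasureTheory.volume 0 1 := hbd.abs
  have hbq : IntervalIntegrable (fun t : ℝ => bern n (k:ℤ) t * (e + κ*(t-x)^2))
      MeasureTheory.volume 0 1 := by
    apply Continuous.intervalIntegrable
    continuity
  have hn1 : ((n:ℝ)+1) ≠ 0 := by positivity
  have e1 : ((n:ℝ)+1) * (∫ t in (0:ℝ)..1, bern n (k:ℤ) t * f t) - f x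
      = ((n:ℝ)+1) * ∫ t in (0:ℝ)..1, bern n (k:ℤ) t * (f t - f x) := by
    have hsplit : (∫ t in (0:ℝ)..1, bern n (k:ℤ) t * (f t - f x))
        = (∫ t in (0:ℝ)..1, bern n (k:ℤ) t * f t)
          - f x * ∫ t in (0:ℝ)..1, bern n (k:ℤ) t := by
      rw [← intervalIntegral.integral_const_mul,
        ← intervalIntegral.integral_sub hbf (hb.const_mul (f x))]
      congr 1; ext t; ring
    rw [hsplit, mom0 n k hk]
    field_simp
  have habs : |∫ t in (0:ℝ)..1, bern n (k:ℤ) t * (f t - f x)|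
      ≤ ∫ t in (0:ℝ)..1, |bern n (k:ℤ) t * (f t - f x)| := by
    have h := intervalIntegral.norm_integral_le_integral_norm
      (f := fun t : ℝ => bern n (k:ℤ) t * (f t - f x)) (μ := MeasureTheory.volume)
      (zero_le_one)
    simpa only [Real.norm_eq_abs] using h
  have hmono : (∫ t in (0:ℝ)..1, |bern n (k:ℤ) t * (f t - f x)|)
      ≤ ∫ t in (0:ℝ)..1, bern n (k:ℤ) t * (e + κ*(t-x)^2) := by
    apply intervalIntegral.integral_mono_on zero_le_one hbd' hbq
    intro t ht
    have hbnn := bern_nonneg n (k:ℤ) ht.1 ht.2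
    rw [abs_mul, abs_of_nonneg hbnn]
    exact mul_le_mul_of_nonneg_left (hpt t ht) hbnn
  have hval : ((n:ℝ)+1) * ∫ t in (0:ℝ)..1, bern n (k:ℤ) t * (e + κ*(t-x)^2)
      = e + κ * M2 (n:ℝ) (k:ℝ) x := by
    have hsq : IntervalIntegrable (fun t : ℝ => bern n (k:ℤ) t * (t-x)^2)
        MeasureTheory.volume 0 1 := by
      apply Continuous.intervalIntegrable; continuity
    have split : (∫ t in (0:ℝ)..1, bern n (k:ℤ) t * (e + κ*(t-x)^2))
        = e * (∫ t in (0:ℝ)..1, bern n (k:ℤ) t)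
          + κ * (∫ t in (0:ℝ)..1, bern n (k:ℤ) t * (t-x)^2) := by
      rw [← intervalIntegral.integral_const_mul, ← intervalIntegral.integral_const_mul,
        ← intervalIntegral.integral_add (hb.const_mul e) (hsq.const_mul κ)]
      congr 1; ext t; ring
    have hm := moment_sq n k hk x
    rw [split, mom0 n k hk]
    calc ((n:ℝ)+1) * (e * (1/((n:ℝ)+1)) + κ * ∫ t in (0:ℝ)..1, bern n (k:ℤ) t * (t-x)^2)
        = e + κ * (((n:ℝ)+1) * ∫ t in (0:ℝ)..1, bern n (k:ℤ) t * (t-x)^2) := by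
          field_simp
      _ = e + κ * M2 (n:ℝ) (k:ℝ) x := by rw [hm]
  calc |((n:ℝ)+1) * (∫ t in (0:ℝ)..1, bern n (k:ℤ) t * f t) - f x|
      = ((n:ℝ)+1) * |∫ t in (0:ℝ)..1, bern n (k:ℤ) t * (f t - f x)| := by
        rw [e1, abs_mul, abs_of_nonneg (by positivity : (0:ℝ) ≤ (n:ℝ)+1)]
    _ ≤ ((n:ℝ)+1) * ∫ t in (0:ℝ)..1, bern n (k:ℤ) t * (e + κ*(t-x)^2) := by
        apply mul_le_mul_of_nonneg_left _ (by positivity : (0:ℝ) ≤ (n:ℝ)+1)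
        exact habs.trans hmono
    _ = e + κ * M2 (n:ℝ) (k:ℝ) x := hval

theorem DM1_uniform_convergence_positive_case (a0 a1 : ℕ → ℝ)
    (hA : ∀ n, 2 * a0 n + a1 n = 1)
    (h0 : ∀ n, 0 ≤ a0 n) (h01 : ∀ n, 0 ≤ a0 n + a1 n)
    (f : ℝ → ℝ) (hf : ContinuousOn f (Set.Icc 0 1)) :
    TendstoUniformlyOn (fun n x => DM1 a0 a1 n f x) f atTop (Set.Icc 0 1) := by
  rw [Metric.tendstoUniformlyOn_iff]
  intro ε hε
  obtain ⟨Mb, hMb⟩ := (isCompact_Icc).exists_bound_of_continuousOn hf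
  have hMb0 : 0 ≤ Mb := le_trans (norm_nonneg _) (hMb 0 (by norm_num))
  have huc : UniformContinuousOn f (Set.Icc 0 1) :=
    (isCompact_Icc).uniformContinuousOn_of_continuous hf
  rw [Metric.uniformContinuousOn_iff] at huc
  obtain ⟨δ, hδ0, hδ⟩ := huc (ε/4) (by positivity)
  set κ : ℝ := 2*Mb/δ^2 with hκdef
  have hκ0 : 0 ≤ κ := by positivity
  have hpt : ∀ x ∈ Set.Icc (0:ℝ) 1, ∀ t ∈ Set.Icc (0:ℝ) 1,
      |f t - f x| ≤ ε/4 + κ*(t-x)^2 := by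
    intro x hx t ht
    by_cases hcase : |t - x| < δ
    · have h5 := hδ t ht x hx (by rw [Real.dist_eq]; exact hcase)
      rw [Real.dist_eq] at h5
      have h6 : 0 ≤ κ*(t-x)^2 := mul_nonneg hκ0 (sq_nonneg _)
      linarith
    · have h1 : δ ≤ |t-x| := not_lt.mp hcase
      have h2 : δ^2 ≤ (t-x)^2 := by
        have := sq_abs (t-x)
        nlinarith [abs_nonneg (t-x)]
      have hδ2 : (0:ℝ) < δ^2 := by positivity
      have h3 : 2*Mb ≤ κ*(t-x)^2 := by
        rw [hκdef, div_mul_eq_mul_div, le_div_iff₀ hδ2]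
        nlinarith
      have h4 : |f t - f x| ≤ 2*Mb := by
        have ht' := hMb t ht
        have hx' := hMb x hx
        rw [Real.norm_eq_abs] at ht' hx'
        calc |f t - f x| ≤ |f t| + |f x| := abs_sub _ _
          _ ≤ 2*Mb := by linarith
      linarith
  obtain ⟨N, hN⟩ := exists_nat_gt (88*κ/ε)
  filter_upwards [eventually_ge_atTop (N+1)] with n hn
  intro x hx
  obtain ⟨x0, x1⟩ := hx
  obtain ⟨m, rfl⟩ : ∃ m, n = m + 1 := ⟨n-1, by omega⟩
  have hmN : (N:ℝ) ≤ (m:ℝ) := by exact_mod_cast Nat.cast_le.mpr (by omega)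
  have hm0 : (0:ℝ) ≤ (m:ℝ) := Nat.cast_nonneg m
  -- the tail bound
  have hg : κ * (((m:ℝ)/2+21)/(((m:ℝ)+3)*((m:ℝ)+4))) < ε/4 := by
    have hg1 : ((m:ℝ)/2+21)/(((m:ℝ)+3)*((m:ℝ)+4)) ≤ 22/((m:ℝ)+3) := by
      rw [div_le_div_iff₀ (by positivity) (by positivity)]
      nlinarith
    have hg2 : κ * (22/((m:ℝ)+3)) < ε/4 := by
      have h88 : 88*κ < (N:ℝ)*ε := (div_lt_iff₀ hε).mp hN
      rw [mul_div_assoc', div_lt_iff₀ (by positivity : (0:ℝ) < (m:ℝ)+3)]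
      nlinarith
    calc κ * (((m:ℝ)/2+21)/(((m:ℝ)+3)*((m:ℝ)+4)))
        ≤ κ * (22/((m:ℝ)+3)) := mul_le_mul_of_nonneg_left hg1 hκ0
      _ < ε/4 := hg2
  -- abbreviations
  set A : ℝ := a1 (m+1) * x + a0 (m+1) with hAdef
  set A' : ℝ := a1 (m+1) * (1-x) + a0 (m+1) with hA'def
  have hAsum : A + A' = 1 := by
    rw [hAdef, hA'def]; linear_combination hA (m+1)
  have hApos : 0 ≤ A := by
    have h1 := h0 (m+1); have h2 := h01 (m+1)
    rw [hAdef]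
    nlinarith [mul_nonneg h1 (by linarith : (0:ℝ) ≤ 1-x), mul_nonneg h2 x0]
  have hA'pos : 0 ≤ A' := by
    have h1 := h0 (m+1); have h2 := h01 (m+1)
    rw [hA'def]
    nlinarith [mul_nonneg h1 x0, mul_nonneg h2 (by linarith : (0:ℝ) ≤ 1-x)]
  set c : ℕ → ℝ := fun k => (((m+1:ℕ):ℝ)+1) * ∫ t in (0:ℝ)..1, bern (m+1) (k:ℤ) t * f t
    with hcdef
  -- rearrangement of DM1
  have hDM : DM1 a0 a1 (m+1) f x
      = A * (∑ j ∈ Finset.range (m+2), bern m (j:ℤ) x * c j)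
        + A' * (∑ j ∈ Finset.range (m+2), bern m ((j:ℤ)-1) x * c j) := by
    rw [DM1, Finset.mul_sum, Finset.mul_sum, Finset.mul_sum, ← Finset.sum_add_distrib]
    apply Finset.sum_congr rfl
    intro k _
    rw [pM1, hcdef]
    simp only [Nat.add_sub_cancel]
    push_cast
    ring
  have reidx : ∑ j ∈ Finset.range (m+2), bern m ((j:ℤ)-1) x * c j
      = ∑ j ∈ Finset.range (m+1), bern m (j:ℤ) x * c (j+1) := by
    rw [Finset.sum_range_succ']
    have hz : bern m ((0:ℕ):ℤ) x * c 0 = bern m 0 x * c 0 := rfl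
    have hneg : ((0:ℕ):ℤ) - 1 = (-1 : ℤ) := by norm_num
    rw [hneg, bern_neg, zero_mul, add_zero]
    apply Finset.sum_congr rfl
    intro j _
    have : ((j+1:ℕ):ℤ) - 1 = (j:ℤ) := by push_cast; ring
    rw [this]
  have trunc : ∑ j ∈ Finset.range (m+2), bern m (j:ℤ) x * c j
      = ∑ j ∈ Finset.range (m+1), bern m (j:ℤ) x * c j := by
    rw [Finset.sum_range_succ, bern_of_gt m (m+1) (by omega), zero_mul, add_zero]
  -- per-index estimates
  have hptx := hpt x ⟨x0, x1⟩
  have est : ∀ i : ℕ, i ≤ 1 →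
      |∑ j ∈ Finset.range (m+1), bern m (j:ℤ) x * (c (j+i) - f x)|
        ≤ ε/4 + κ * (((m:ℝ)/2+21)/(((m:ℝ)+3)*((m:ℝ)+4))) := by
    intro i hi
    have bnn : ∀ j : ℕ, 0 ≤ bern m (j:ℤ) x := fun j => bern_nonneg m _ x0 x1
    have step1 : |∑ j ∈ Finset.range (m+1), bern m (j:ℤ) x * (c (j+i) - f x)|
        ≤ ∑ j ∈ Finset.range (m+1), bern m (j:ℤ) x * |c (j+i) - f x| := by
      refine (Finset.abs_sum_le_sum_abs _ _).trans (le_of_eq ?_)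
      apply Finset.sum_congr rfl
      intro j _
      rw [abs_mul, abs_of_nonneg (bnn j)]
    have step2 : ∑ j ∈ Finset.range (m+1), bern m (j:ℤ) x * |c (j+i) - f x|
        ≤ ∑ j ∈ Finset.range (m+1), bern m (j:ℤ) x
            * (ε/4 + κ * M2 (((m+1:ℕ)):ℝ) (((j+i:ℕ)):ℝ) x) := by
      apply Finset.sum_le_sum
      intro j hj
      apply mul_le_mul_of_nonneg_left _ (bnn j)
      have hji : j + i ≤ m + 1 := by
        have := Finset.mem_range.mp hj; omega
      exact ck_est (m+1) (j+i) hji f hf x ⟨x0, x1⟩ (ε/4) κ hκ0 hptx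
    have step3 : ∑ j ∈ Finset.range (m+1), bern m (j:ℤ) x
            * (ε/4 + κ * M2 (((m+1:ℕ)):ℝ) (((j+i:ℕ)):ℝ) x)
        = ε/4 + κ * ∑ j ∈ Finset.range (m+1),
            bern m (j:ℤ) x * M2 ((m:ℝ)+1) ((j:ℝ)+(i:ℝ)) x := by
      have cast1 : ∀ j : ℕ, M2 (((m+1:ℕ)):ℝ) (((j+i:ℕ)):ℝ) x
          = M2 ((m:ℝ)+1) ((j:ℝ)+(i:ℝ)) x := by
        intro j; push_cast; rfl
      simp only [cast1]
      rw [Finset.sum_congr rfl (fun j _ => by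
        show bern m (j:ℤ) x * (ε/4 + κ * M2 ((m:ℝ)+1) ((j:ℝ)+(i:ℝ)) x)
            = (ε/4) * bern m (j:ℤ) x + κ * (bern m (j:ℤ) x * M2 ((m:ℝ)+1) ((j:ℝ)+(i:ℝ)) x)
        ring)]
      rw [Finset.sum_add_distrib, ← Finset.mul_sum, ← Finset.mul_sum, sumS0, mul_one]
    have step4 : κ * ∑ j ∈ Finset.range (m+1),
            bern m (j:ℤ) x * M2 ((m:ℝ)+1) ((j:ℝ)+(i:ℝ)) x
        ≤ κ * (((m:ℝ)/2+21)/(((m:ℝ)+3)*((m:ℝ)+4))) := by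
      apply mul_le_mul_of_nonneg_left _ hκ0
      exact sum_M2_bound m (i:ℝ) x (by positivity) (by exact_mod_cast hi) x0 x1
    calc |∑ j ∈ Finset.range (m+1), bern m (j:ℤ) x * (c (j+i) - f x)|
        ≤ ∑ j ∈ Finset.range (m+1), bern m (j:ℤ) x * |c (j+i) - f x| := step1
      _ ≤ ∑ j ∈ Finset.range (m+1), bern m (j:ℤ) x
            * (ε/4 + κ * M2 (((m+1:ℕ)):ℝ) (((j+i:ℕ)):ℝ) x) := step2
      _ = ε/4 + κ * ∑ j ∈ Finset.range (m+1),
            bern m (j:ℤ) x * M2 ((m:ℝ)+1) ((j:ℝ)+(i:ℝ)) x := step3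
      _ ≤ ε/4 + κ * (((m:ℝ)/2+21)/(((m:ℝ)+3)*((m:ℝ)+4))) := by linarith [step4]
  -- decomposition of the error
  have key : DM1 a0 a1 (m+1) f x - f x
      = A * (∑ j ∈ Finset.range (m+1), bern m (j:ℤ) x * (c j - f x))
        + A' * (∑ j ∈ Finset.range (m+1), bern m (j:ℤ) x * (c (j+1) - f x)) := by
    have s1 : ∑ j ∈ Finset.range (m+1), bern m (j:ℤ) x * (c j - f x)
        = (∑ j ∈ Finset.range (m+1), bern m (j:ℤ) x * c j) - f x := by
      rw [Finset.sum_congr rfl (fun j _ => by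
        show bern m (j:ℤ) x * (c j - f x)
            = bern m (j:ℤ) x * c j - f x * bern m (j:ℤ) x
        ring)]
      rw [Finset.sum_sub_distrib, ← Finset.mul_sum, sumS0, mul_one]
    have s2 : ∑ j ∈ Finset.range (m+1), bern m (j:ℤ) x * (c (j+1) - f x)
        = (∑ j ∈ Finset.range (m+1), bern m (j:ℤ) x * c (j+1)) - f x := by
      rw [Finset.sum_congr rfl (fun j _ => by
        show bern m (j:ℤ) x * (c (j+1) - f x)
            = bern m (j:ℤ) x * c (j+1) - f x * bern m (j:ℤ) x
        ring)]
      rw [Finset.sum_sub_distrib, ← Finset.mul_sum, sumS0, mul_one]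
    rw [hDM, trunc, reidx, s1, s2]
    linear_combination (f x) * hAsum
  -- final estimate
  rw [Real.dist_eq, abs_sub_comm, key]
  have e0 := est 0 (by norm_num)
  have e1 := est 1 (by norm_num)
  simp only [Nat.add_zero] at e0
  have habs : |A * (∑ j ∈ Finset.range (m+1), bern m (j:ℤ) x * (c j - f x))
      + A' * (∑ j ∈ Finset.range (m+1), bern m (j:ℤ) x * (c (j+1) - f x))|
      ≤ A * (ε/4 + κ * (((m:ℝ)/2+21)/(((m:ℝ)+3)*((m:ℝ)+4))))
        + A' * (ε/4 + κ * (((m:ℝ)/2+21)/(((m:ℝ)+3)*((m:ℝ)+4)))) := by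
    calc |A * (∑ j ∈ Finset.range (m+1), bern m (j:ℤ) x * (c j - f x))
        + A' * (∑ j ∈ Finset.range (m+1), bern m (j:ℤ) x * (c (j+1) - f x))|
        ≤ |A * (∑ j ∈ Finset.range (m+1), bern m (j:ℤ) x * (c j - f x))|
          + |A' * (∑ j ∈ Finset.range (m+1), bern m (j:ℤ) x * (c (j+1) - f x))| :=
          abs_add_le _ _
      _ ≤ A * (ε/4 + κ * (((m:ℝ)/2+21)/(((m:ℝ)+3)*((m:ℝ)+4))))
          + A' * (ε/4 + κ * (((m:ℝ)/2+21)/(((m:ℝ)+3)*((m:ℝ)+4)))) := by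
          rw [abs_mul, abs_mul, abs_of_nonneg hApos, abs_of_nonneg hA'pos]
          exact add_le_add (mul_le_mul_of_nonneg_left e0 hApos)
            (mul_le_mul_of_nonneg_left e1 hA'pos)
  have hfin : A * (ε/4 + κ * (((m:ℝ)/2+21)/(((m:ℝ)+3)*((m:ℝ)+4))))
      + A' * (ε/4 + κ * (((m:ℝ)/2+21)/(((m:ℝ)+3)*((m:ℝ)+4))))
      = ε/4 + κ * (((m:ℝ)/2+21)/(((m:ℝ)+3)*((m:ℝ)+4))) := by
    linear_combination (ε/4 + κ * (((m:ℝ)/2+21)/(((m:ℝ)+3)*((m:ℝ)+4)))) * hAsum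
  rw [hfin] at habs
  calc |A * (∑ j ∈ Finset.range (m+1), bern m (j:ℤ) x * (c j - f x))
      + A' * (∑ j ∈ Finset.range (m+1), bern m (j:ℤ) x * (c (j+1) - f x))|
      ≤ ε/4 + κ * (((m:ℝ)/2+21)/(((m:ℝ)+3)*((m:ℝ)+4))) := habs
    _ < ε/4 + ε/4 := by linarith
    _ < ε := by linarith
end
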